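/- Let (Ā, B̄) be the structural pair composed of r similar subsystems parametrized by (Ā', B̄', H̄, Ē), where (Ā', B̄') is not structurally controllable. If (Ā' ∨ H̄, B̄') is structurally controllable and the condensed graph D(Ē) is spanned by disjoint cycles, i.e., there exists a permutation σ of {1,…,r} with Ē_{σ(i),i} = 1 for all i, then (Ā, B̄) is structurally controllable. -/

import Mathlib

open Matrix

/-- Controllability matrix `[B, AB, …, A^{n-1}B]` (columns indexed by `Fin (card X) × U`). -/
def ctrbMatrix {X U : Type*} [Fintype X] [DecidableEq X]
    (A : Matrix X X ℝ) (B : Matrix X U ℝ) :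
    Matrix X (Fin (Fintype.card X) × U) ℝ :=
  fun i kj => (A ^ (kj.1 : ℕ) * B) i kj.2

/-- A real pair `(A,B)` is controllable if its controllability matrix has full rank. -/
def Controllable {X U : Type*} [Fintype X] [DecidableEq X] [Fintype U]
    (A : Matrix X X ℝ) (B : Matrix X U ℝ) : Prop :=
  (ctrbMatrix A B).rank = Fintype.card X

/-- `M` has the same sparsity pattern as the Boolean matrix `Mb`. -/
def SameSparsity {X Y : Type*} (M : Matrix X Y ℝ) (Mb : Matrix X Y Bool) : Prop :=
  ∀ i j, M i j = 0 ↔ Mb i j = false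

/-- Structural controllability of a structural (Boolean) pair. -/
def StructurallyControllable {X U : Type*} [Fintype X] [DecidableEq X] [Fintype U]
    (Ab : Matrix X X Bool) (Bb : Matrix X U Bool) : Prop :=
  ∃ A : Matrix X X ℝ, ∃ B : Matrix X U ℝ,
    SameSparsity A Ab ∧ SameSparsity B Bb ∧ Controllable A B

/-- Edge relation of the system digraph `D(Ā,B̄)`. -/
def sysDigraphRel {X U : Type*} (Ab : Matrix X X Bool) (Bb : Matrix X U Bool) :
    (X ⊕ U) → (X ⊕ U) → Prop :=
  fun v w => match v, w with
  | Sum.inl j, Sum.inl i => Ab i j = true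
  | Sum.inr k, Sum.inl i => Bb i k = true
  | _, Sum.inr _ => False

/-- A state vertex is input-reachable if some input vertex has a directed path to it. -/
def InputReachable {X U : Type*} (Ab : Matrix X X Bool) (Bb : Matrix X U Bool) (x : X) : Prop :=
  ∃ u : U, Relation.ReflTransGen (sysDigraphRel Ab Bb) (Sum.inr u) (Sum.inl x)

/-- Edge relation of the system bipartite graph `B(Ā,B̄)` (left = states ⊕ inputs, right = states). -/
def sysBipEdge {X U : Type*} (Ab : Matrix X X Bool) (Bb : Matrix X U Bool) :
    (X ⊕ U) → X → Prop :=
  fun v i => match v with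
  | Sum.inl j => Ab i j = true
  | Sum.inr k => Bb i k = true

/-- Edge relation of the state bipartite graph `B(Ā)`. -/
def stateBipEdge {X : Type*} (Ab : Matrix X X Bool) : X → X → Prop :=
  fun j i => Ab i j = true

/-- A matching of a bipartite graph with edge relation `E`: a set of edges sharing no
left vertex and no right vertex. -/
def IsMatching {α β : Type*} (E : α → β → Prop) (M : Set (α × β)) : Prop :=
  (∀ e ∈ M, E e.1 e.2) ∧
  (∀ e ∈ M, ∀ f ∈ M, e.1 = f.1 → e = f) ∧
  (∀ e ∈ M, ∀ f ∈ M, e.2 = f.2 → e = f)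

/-- Right vertices belonging to no edge of `M`. -/
def rightUnmatched {α β : Type*} (M : Set (α × β)) : Set β :=
  {b | ∀ e ∈ M, e.2 ≠ b}

/-- Left vertices belonging to no edge of `M`. -/
def leftUnmatched {α β : Type*} (M : Set (α × β)) : Set α :=
  {a | ∀ e ∈ M, e.1 ≠ a}

/-- A maximum matching: a matching of the largest cardinality. -/
def IsMaxMatching {α β : Type*} (E : α → β → Prop) (M : Set (α × β)) : Prop :=
  IsMatching E M ∧ ∀ M' : Set (α × β), IsMatching E M' → M'.ncard ≤ M.ncard

/-- `S` is a strongly connected component of the digraph with edge relation `R`. -/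
def IsSCC {V : Type*} (R : V → V → Prop) (S : Set V) : Prop :=
  S.Nonempty ∧ (∀ u ∈ S, ∀ v ∈ S, Relation.ReflTransGen R u v) ∧
  ∀ w : V, (∀ u ∈ S, Relation.ReflTransGen R u w ∧ Relation.ReflTransGen R w u) → w ∈ S

/-- An SCC is non-top linked if it has no incoming edge from outside. -/
def NonTopLinked {V : Type*} (R : V → V → Prop) (S : Set V) : Prop :=
  ∀ u v : V, R u v → v ∈ S → u ∈ S

/-- Dynamics pattern `(I_r ⊗ Ā') ∨ (Ē ⊗ H̄)` of a system of `r` similar subsystems. -/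
def simA {n : ℕ} (r : ℕ) (A' H : Matrix (Fin n) (Fin n) Bool)
    (E : Matrix (Fin r) (Fin r) Bool) :
    Matrix (Fin r × Fin n) (Fin r × Fin n) Bool :=
  fun q q' => ((if q.1 = q'.1 then A' q.2 q'.2 else false) || (E q.1 q'.1 && H q.2 q'.2))

/-- Input pattern `I_r ⊗ B̄'` of a system of `r` similar subsystems. -/
def simB {n p : ℕ} (r : ℕ) (B' : Matrix (Fin n) (Fin p) Bool) :
    Matrix (Fin r × Fin n) (Fin r × Fin p) Bool :=
  fun q k => if q.1 = k.1 then B' q.2 k.2 else false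

/-- Entrywise OR of Boolean matrices. -/
def orMat {X Y : Type*} (M N : Matrix X Y Bool) : Matrix X Y Bool :=
  fun i j => M i j || N i j

/-- Dynamics pattern of an interconnected system: diagonal blocks `Ā_i`,
off-diagonal blocks `Ē_{i,j}`. -/
def interA {r : ℕ} {n : Fin r → ℕ}
    (A : ∀ i, Matrix (Fin (n i)) (Fin (n i)) Bool)
    (E : ∀ i j, Matrix (Fin (n i)) (Fin (n j)) Bool) :
    Matrix (Σ i, Fin (n i)) (Σ i, Fin (n i)) Bool :=
  fun q q' => if h : q'.1 = q.1 then A q.1 q.2 (h ▸ q'.2) else E q.1 q'.1 q.2 q'.2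

/-- Input pattern of an interconnected system: block diagonal with blocks `B̄_i`. -/
def interB {r : ℕ} {n p : Fin r → ℕ}
    (B : ∀ i, Matrix (Fin (n i)) (Fin (p i)) Bool) :
    Matrix (Σ i, Fin (n i)) (Σ i, Fin (p i)) Bool :=
  fun q k => if h : k.1 = q.1 then B q.1 q.2 (h ▸ k.2) else false

/-- Generalized controllability-style matrix over any commutative ring. -/
def ctrbM {R : Type*} [CommRing R] {X U : Type*} [Fintype X] [DecidableEq X] (N : ℕ)
    (A : Matrix X X R) (B : Matrix X U R) : Matrix X (Fin N × U) R :=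
  fun i kj => (A ^ (kj.1 : ℕ) * B) i kj.2

lemma ctrbM_map {R S : Type*} [CommRing R] [CommRing S] (f : R →+* S)
    {X U : Type*} [Fintype X] [DecidableEq X] (N : ℕ)
    (A : Matrix X X R) (B : Matrix X U R) :
    (ctrbM N A B).map f = ctrbM N (A.map f) (B.map f) := by
  ext i kj
  have h1 : (A ^ (kj.1 : ℕ)).map f = (A.map f) ^ (kj.1 : ℕ) := by
    have := map_pow f.mapMatrix A (kj.1 : ℕ)
    simpa [RingHom.mapMatrix_apply] using this
  show f ((A ^ (kj.1:ℕ) * B) i kj.2) = _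
  rw [← Matrix.map_apply (f := f), Matrix.map_mul, h1]
  rfl

section Field
variable {F : Type*} [Field F]

lemma vecMul_submatrix_eq_zero {X C : Type*} [Fintype X] [Fintype C]
    {M : Matrix X C F} (g : X → C) {v : X → F} (hv : v ᵥ* M = 0) :
    v ᵥ* (M.submatrix id g) = 0 := by
  funext i
  have := congrFun hv (g i)
  simpa [Matrix.vecMul, dotProduct] using this

lemma eq_zero_of_vecMul_of_det {X C : Type*} [Fintype X] [DecidableEq X] [Fintype C]
    {M : Matrix X C F} {g : X → C} (hdet : (M.submatrix id g).det ≠ 0)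
    {v : X → F} (hv : v ᵥ* M = 0) : v = 0 := by
  have h1 := vecMul_submatrix_eq_zero g hv
  have h2 := congrArg (· ᵥ* (M.submatrix id g)⁻¹) h1
  simpa [Matrix.vecMul_vecMul, Matrix.mul_nonsing_inv _ (isUnit_iff_ne_zero.mpr hdet),
    Matrix.vecMul_one, Matrix.zero_vecMul] using h2

lemma rank_eq_card_of_vecMul {X C : Type*} [Fintype X] [Fintype C]
    {M : Matrix X C F} (h : ∀ v : X → F, v ᵥ* M = 0 → v = 0) :
    M.rank = Fintype.card X := by
  rw [← Matrix.rank_transpose]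
  have hinj : Function.Injective Mᵀ.mulVecLin := by
    intro a b hab
    have hab' : (a - b) ᵥ* M = 0 := by
      rw [← Matrix.mulVec_transpose, Matrix.mulVec_sub]
      simp only [Matrix.mulVecLin_apply] at hab
      rw [hab, sub_self]
    have := h _ hab'
    exact sub_eq_zero.mp this
  have hr : Mᵀ.rank = Module.finrank F (LinearMap.range Mᵀ.mulVecLin) := rfl
  rw [hr, LinearMap.finrank_range_of_inj hinj, Module.finrank_pi]

lemma exists_minor_det_ne_zero {X C : Type*} [Fintype X] [DecidableEq X] [Fintype C]
    {M : Matrix X C F} (h : M.rank = Fintype.card X) :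
    ∃ g : X → C, (M.submatrix id g).det ≠ 0 := by
  classical
  have hrk : Module.finrank F (LinearMap.range M.mulVecLin) = Fintype.card X := h
  have htop : LinearMap.range M.mulVecLin = ⊤ := by
    apply Submodule.eq_top_of_finrank_eq
    rw [hrk, Module.finrank_pi]
  have hsurj : ∀ y : X → F, ∃ w, M *ᵥ w = y := by
    intro y
    have : y ∈ LinearMap.range M.mulVecLin := htop ▸ Submodule.mem_top
    obtain ⟨w, hw⟩ := this
    exact ⟨w, hw⟩
  choose W hW using fun i => hsurj (Pi.single i 1)
  set Nm : Matrix C X F := fun c i => W i c with hNm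
  have hMN : M * Nm = 1 := by
    ext i i'
    rw [Matrix.mul_apply, Matrix.one_apply]
    have h2 := congrFun (hW i') i
    simp only [Matrix.mulVec, dotProduct] at h2
    rw [show (∑ c : C, M i c * Nm c i') = (Pi.single i' 1 : X → F) i from by simpa [hNm] using h2]
    simp [Pi.single_apply, eq_comm]
  by_contra hcon
  push_neg at hcon
  have hdet1 : (M * Nm).det = 1 := by rw [hMN, Matrix.det_one]
  have hexp : (M * Nm).det = 0 := by
    rw [← Matrix.det_transpose, Matrix.transpose_mul]
    have hrows : Nmᵀ * Mᵀ = Matrix.of (fun i => ∑ c : C, Nm c i • Mᵀ c) := by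
      ext i j
      simp [Matrix.mul_apply, Matrix.transpose_apply, Finset.sum_apply, smul_eq_mul]
    rw [hrows]
    have hdef : (Matrix.of fun i => ∑ c : C, Nm c i • Mᵀ c).det
        = Matrix.detRowAlternating.toMultilinearMap (fun i : X => ∑ c : C, Nm c i • Mᵀ c) := rfl
    rw [hdef, MultilinearMap.map_sum]
    apply Finset.sum_eq_zero
    intro r _
    have : Matrix.detRowAlternating.toMultilinearMap (fun i : X => Nm (r i) i • Mᵀ (r i))
        = (∏ i : X, Nm (r i) i) • Matrix.detRowAlternating.toMultilinearMap (fun i : X => Mᵀ (r i)) := by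
      exact MultilinearMap.map_smul_univ _ _ _
    rw [this]
    have hsub : Matrix.detRowAlternating.toMultilinearMap (fun i : X => Mᵀ (r i))
        = (M.submatrix id r).det := by
      have : Matrix.detRowAlternating.toMultilinearMap (fun i : X => Mᵀ (r i))
          = (Mᵀ.submatrix r id).det := rfl
      rw [this, ← Matrix.transpose_submatrix, Matrix.det_transpose]
    rw [hsub, hcon r, smul_zero]
  rw [hdet1] at hexp
  exact one_ne_zero hexp

end Field


lemma perm_eigen_decomp {r : ℕ} (σ : Equiv.Perm (Fin r)) (M : ℕ) (hM : 0 < M)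
    (hσM : σ ^ M = 1) {ζ : ℂ} (hζ : IsPrimitiveRoot ζ M) (x : Fin r → ℂ) :
    ∃ z : ℕ → (Fin r → ℂ),
      (∀ t k, z t (σ⁻¹ k) = ζ ^ t * z t k) ∧
      (∀ k, ∑ t ∈ Finset.range M, z t k = x k) := by
  set τ := σ⁻¹ with hτdef
  have hτM : τ ^ M = 1 := by rw [hτdef, inv_pow, hσM, inv_one]
  set w := ζ⁻¹ with hwdef
  have hζ0 : ζ ≠ 0 := hζ.ne_zero hM.ne'
  have hzw : ζ * w = 1 := mul_inv_cancel₀ hζ0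
  have hwM : w ^ M = 1 := by rw [hwdef, inv_pow, hζ.pow_eq_one, inv_one]
  refine ⟨fun t k => (M:ℂ)⁻¹ * ∑ m ∈ Finset.range M, w ^ (t*m) * x ((τ ^ m) k), ?_, ?_⟩
  · intro t k
    have key : ∀ m : ℕ, (τ ^ m) (τ k) = (τ ^ (m+1)) k := by
      intro m; rw [pow_succ, Equiv.Perm.mul_apply]
    simp only [key]
    have hstep : ∀ m : ℕ, w ^ (t*m) * x ((τ ^ (m+1)) k)
        = ζ ^ t * (w ^ (t*(m+1)) * x ((τ ^ (m+1)) k)) := by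
      intro m
      have : (ζ:ℂ) ^ t * w ^ (t*(m+1)) = w ^ (t*m) := by
        rw [Nat.mul_succ, pow_add, ← mul_assoc, mul_comm (ζ ^ t), mul_assoc, ← mul_pow,
          hzw, one_pow, mul_one]
      rw [← mul_assoc, this]
    simp only [hstep]
    rw [← Finset.mul_sum, ← mul_assoc, mul_comm ((M:ℂ)⁻¹), mul_assoc]
    congr 1
    congr 1
    -- ∑ m in range M, H (m+1) = ∑ m in range M, H m  where H m = w^(t*m) * x (τ^m k)
    set H : ℕ → ℂ := fun m => w ^ (t*m) * x ((τ ^ m) k) with hH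
    have h1 := Finset.sum_range_succ' H M
    have h2 := Finset.sum_range_succ H M
    have hHM : H M = H 0 := by
      have hk : (1 : Equiv.Perm (Fin r)) k = k := rfl
      simp only [hH, Nat.mul_zero, pow_zero, one_mul, hτM, hk]
      rw [mul_comm t M, pow_mul, hwM, one_pow, one_mul]
    rw [h2, hHM] at h1
    -- h1 : ∑ range M H + H 0 = ∑ range M (H (k+1)) + H 0
    exact (add_right_cancel h1.symm)
  · intro k
    have h1 : ∀ t, ((M:ℂ)⁻¹ * ∑ m ∈ Finset.range M, w ^ (t*m) * x ((τ ^ m) k))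
        = (M:ℂ)⁻¹ * ∑ m ∈ Finset.range M, (w^m)^t * x ((τ ^ m) k) := by
      intro t; congr 1; apply Finset.sum_congr rfl; intro m _
      rw [← pow_mul, mul_comm m t]
    simp only [h1]
    rw [← Finset.mul_sum, Finset.sum_comm]
    have h2 : ∀ m ∈ Finset.range M, (∑ t ∈ Finset.range M, (w^m)^t * x ((τ ^ m) k))
        = (∑ t ∈ Finset.range M, (w^m)^t) * x ((τ ^ m) k) := by
      intro m _; rw [Finset.sum_mul]
    rw [Finset.sum_congr rfl h2]
    rw [Finset.sum_eq_single 0]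
    · have hk : (1 : Equiv.Perm (Fin r)) k = k := rfl
      simp only [pow_zero, one_pow, hk]
      rw [Finset.sum_const, Finset.card_range, nsmul_eq_mul, mul_one, ← mul_assoc,
        inv_mul_cancel₀ (by exact_mod_cast hM.ne' : (M:ℂ) ≠ 0), one_mul]
    · intro m hm hm0
      have hwm1 : w ^ m ≠ 1 := by
        have := (hζ.inv).pow_ne_one_of_pos_of_lt hm0 (Finset.mem_range.mp hm)
        simpa [hwdef] using this
      rw [geom_sum_eq hwm1, ← pow_mul, mul_comm m M, pow_mul, hwM, one_pow, sub_self, zero_div,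
        zero_mul]
    · intro h0
      exact absurd (Finset.mem_range.mpr hM) h0


def tens {r n : ℕ} (z : Fin r → ℂ) (x : Fin n → ℂ) : Fin r × Fin n → ℂ := fun i => z i.1 * x i.2

lemma big_mulVec_tens {r n : ℕ} (σ : Equiv.Perm (Fin r)) (A0 Hs : Matrix (Fin n) (Fin n) ℂ)
    (lam : ℂ) (z : Fin r → ℂ) (hz : ∀ k, z (σ⁻¹ k) = lam * z k) (x : Fin n → ℂ) :
    (Matrix.of fun (i j : Fin r × Fin n) =>
        (if i.1 = j.1 then A0 i.2 j.2 else 0) + (if i.1 = σ j.1 then Hs i.2 j.2 else 0))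
      *ᵥ (tens z x) = tens z ((A0 + lam • Hs) *ᵥ x) := by
  funext ⟨k, q⟩
  show (∑ j : Fin r × Fin n, _) = _
  rw [Fintype.sum_prod_type]
  simp only [Matrix.of_apply, tens, add_mul, ite_mul, zero_mul, Finset.sum_add_distrib,
    Finset.sum_ite_irrel, Finset.sum_const_zero]
  have h1 : (∑ k' : Fin r, if k = k' then ∑ q' : Fin n, A0 q q' * (z k' * x q') else 0)
      = z k * (A0 *ᵥ x) q := by
    rw [Finset.sum_ite_eq, if_pos (Finset.mem_univ k)]
    simp only [Matrix.mulVec, dotProduct, Finset.mul_sum]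
    apply Finset.sum_congr rfl; intro q' _; ring
  have h2 : (∑ k' : Fin r, if k = σ k' then ∑ q' : Fin n, Hs q q' * (z k' * x q') else 0)
      = lam * (z k * (Hs *ᵥ x) q) := by
    have hcond : ∀ k' : Fin r, (k = σ k') ↔ (σ⁻¹ k = k') := by
      intro k'; rw [Equiv.Perm.inv_def]; exact (Equiv.symm_apply_eq σ).symm
    simp only [hcond]
    rw [Finset.sum_ite_eq, if_pos (Finset.mem_univ (σ⁻¹ k))]
    simp only [hz k, Matrix.mulVec, dotProduct, Finset.mul_sum]
    apply Finset.sum_congr rfl; intro q' _; ring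
  rw [h1, h2]
  have h3 : ((A0 + lam • Hs) *ᵥ x) q = (A0 *ᵥ x) q + lam * (Hs *ᵥ x) q := by
    rw [Matrix.add_mulVec, Matrix.smul_mulVec]
    simp
  show _ = z k * ((A0 + lam • Hs) *ᵥ x) q
  rw [h3]; ring

lemma bigB_mulVec_tens {r n p : ℕ} (B0 : Matrix (Fin n) (Fin p) ℂ) (z : Fin r → ℂ) (y : Fin p → ℂ) :
    (Matrix.of fun (i : Fin r × Fin n) (u : Fin r × Fin p) =>
        if i.1 = u.1 then B0 i.2 u.2 else 0) *ᵥ (tens z y) = tens z (B0 *ᵥ y) := by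
  funext ⟨k, q⟩
  show (∑ u : Fin r × Fin p, _) = _
  rw [Fintype.sum_prod_type]
  simp only [Matrix.of_apply, tens, ite_mul, zero_mul, Finset.sum_ite_irrel, Finset.sum_const_zero]
  rw [Finset.sum_ite_eq, if_pos (Finset.mem_univ k)]
  show _ = z k * (B0 *ᵥ y) q
  simp only [Matrix.mulVec, dotProduct, Finset.mul_sum]
  apply Finset.sum_congr rfl; intro u' _; ring

lemma big_pow_mulVec_tens {r n : ℕ} (σ : Equiv.Perm (Fin r)) (A0 Hs : Matrix (Fin n) (Fin n) ℂ)
    (lam : ℂ) (z : Fin r → ℂ) (hz : ∀ k, z (σ⁻¹ k) = lam * z k) (x : Fin n → ℂ) (j : ℕ) :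
    ((Matrix.of fun (i j : Fin r × Fin n) =>
        (if i.1 = j.1 then A0 i.2 j.2 else 0) + (if i.1 = σ j.1 then Hs i.2 j.2 else 0)) ^ j)
      *ᵥ (tens z x) = tens z (((A0 + lam • Hs) ^ j) *ᵥ x) := by
  induction j with
  | zero => simp [pow_zero, Matrix.one_mulVec]
  | succ j ih =>
      rw [pow_succ', pow_succ', ← Matrix.mulVec_mulVec, ih, big_mulVec_tens σ A0 Hs lam z hz,
        Matrix.mulVec_mulVec]


lemma eval_det_ctrbM {R S : Type*} [CommRing R] [CommRing S] (f : R →+* S)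
    {X U : Type*} [Fintype X] [DecidableEq X] (N : ℕ)
    (A : Matrix X X R) (B : Matrix X U R) (g : X → Fin N × U) :
    f ((ctrbM N A B).submatrix id g).det
      = ((ctrbM N (A.map f) (B.map f)).submatrix id g).det := by
  rw [RingHom.map_det]
  congr 1
  rw [← ctrbM_map f N A B]
  ext i j
  simp [Matrix.submatrix_apply, Matrix.map_apply]

/-- Theorem 2 of the paper: for a system of `r` similar subsystems
parametrized by `(Ā', B̄', H̄, Ē)` with `(Ā', B̄')` not structurally controllable,
if `(Ā' ∨ H̄, B̄')` is structurally controllable and the condensed graph `D(Ē)` is spanned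
by disjoint cycles (i.e. some permutation `σ` has `Ē_{σ(i),i} = 1` for all `i`), then the
overall system is structurally controllable. -/
theorem similar_system_struct_controllable_of_cycle_spanned
    {n p : ℕ} {r : ℕ}
    (A' H : Matrix (Fin n) (Fin n) Bool) (B' : Matrix (Fin n) (Fin p) Bool)
    (E : Matrix (Fin r) (Fin r) Bool) (hE : ∀ i, E i i = false)
    (hnsc : ¬ StructurallyControllable A' B')
    (hsc : StructurallyControllable (orMat A' H) B')
    (hcyc : ∃ σ : Equiv.Perm (Fin r), ∀ i : Fin r, E (σ i) i = true) :
    StructurallyControllable (simA r A' H E) (simB r B') := by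
  classical
  obtain ⟨σ, hσ⟩ := hcyc
  obtain ⟨Msc, Bsc, hMs, hBs, hCs⟩ := hsc
  by_cases hr : r = 0
  · subst hr
    refine ⟨0, 0, fun i j => i.1.elim0, fun i j => i.1.elim0, ?_⟩
    show (ctrbMatrix _ _).rank = _
    have h0 : Fintype.card (Fin 0 × Fin n) = 0 := by simp
    have h1 := Matrix.rank_le_card_height
      (ctrbMatrix (0 : Matrix (Fin 0 × Fin n) (Fin 0 × Fin n) ℝ)
        (0 : Matrix (Fin 0 × Fin n) (Fin 0 × Fin p) ℝ))
    omega
  have hrpos : 0 < r := Nat.pos_of_ne_zero hr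
  -- split the witness of (A' ∨ H, B')
  set H0 : Matrix (Fin n) (Fin n) ℝ :=
    fun i j => if H i j = true ∧ A' i j = false then Msc i j else 0 with hH0def
  set A0 : Matrix (Fin n) (Fin n) ℝ := Msc - H0 with hA0def
  have hsum : A0 + H0 = Msc := by rw [hA0def]; abel
  have hH0supp : ∀ i j, H i j = false → H0 i j = 0 := by
    intro i j hij
    simp [hH0def, hij]
  have hA0supp : ∀ i j, A' i j = false → A0 i j = 0 := by
    intro i j hij
    have : A0 i j = Msc i j - H0 i j := rfl
    rw [this]
    by_cases hH : H i j = true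
    · rw [show H0 i j = Msc i j from by simp [hH0def, hH, hij], sub_self]
    · have hb : H i j = false := by revert hH; cases (H i j) <;> simp
      have : Msc i j = 0 := (hMs i j).mpr (by simp [orMat, hij, hb])
      rw [this, hH0supp i j hb, sub_self]
  -- a nonvanishing minor of the controllability matrix of (A0 + H0, Bsc)
  set n' := Fintype.card (Fin n) with hn'def
  obtain ⟨g0, hg0⟩ := exists_minor_det_ne_zero (M := ctrbMatrix Msc Bsc) hCs
  -- roots of unity setup
  set M := orderOf σ with hMdef
  have hM : 0 < M := orderOf_pos σ
  have hσM : σ ^ M = 1 := pow_orderOf_eq_one σ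
  set ζ : ℂ := Complex.exp (2 * Real.pi * Complex.I / M) with hζdef
  have hζ : IsPrimitiveRoot ζ M := Complex.isPrimitiveRoot_exp M hM.ne'
  have hζ0 : ζ ≠ 0 := hζ.ne_zero hM.ne'
  -- polynomial family in one complex variable
  set PB : Matrix (Fin n) (Fin p) (Polynomial ℂ) :=
    Matrix.of fun i u => Polynomial.C ((Bsc i u : ℝ) : ℂ) with hPBdef
  set Pm : ℕ → Matrix (Fin n) (Fin n) (Polynomial ℂ) := fun τ =>
    Matrix.of fun i j => Polynomial.C ((A0 i j : ℝ) : ℂ)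
      + Polynomial.C (ζ ^ τ * ((H0 i j : ℝ) : ℂ)) * Polynomial.X with hPmdef
  set d : ℕ → Polynomial ℂ := fun τ => ((ctrbM n' (Pm τ) PB).submatrix id g0).det with hddef
  have hdeval : ∀ (τ : ℕ) (s : ℂ), (d τ).eval s
      = ((ctrbM n' (Matrix.of fun i j => ((A0 i j : ℝ) : ℂ) + ζ ^ τ * s * ((H0 i j : ℝ) : ℂ))
          (Matrix.of fun i u => ((Bsc i u : ℝ) : ℂ))).submatrix id g0).det := by
    intro τ s
    have hA : (Pm τ).map (Polynomial.evalRingHom s)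
        = Matrix.of (fun i j => ((A0 i j : ℝ) : ℂ) + ζ ^ τ * s * ((H0 i j : ℝ) : ℂ)) := by
      funext i j
      simp [hPmdef, Matrix.map_apply]
      ring
    have hB : PB.map (Polynomial.evalRingHom s) = Matrix.of (fun i u => ((Bsc i u : ℝ) : ℂ)) := by
      funext i u
      simp [hPBdef, Matrix.map_apply]
    have h1 := eval_det_ctrbM (Polynomial.evalRingHom s) n' (Pm τ) PB g0
    rw [hA, hB] at h1
    have h2 : (Polynomial.evalRingHom s) (d τ) = (d τ).eval s := rfl
    rw [← h2]
    exact h1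
  have hd0 : ∀ τ : ℕ, d τ ≠ 0 := by
    intro τ hzero
    have h1 := hdeval τ (ζ ^ τ)⁻¹
    rw [hzero] at h1
    have hmats : (Matrix.of fun i j => ((A0 i j : ℝ) : ℂ) + ζ ^ τ * (ζ ^ τ)⁻¹ * ((H0 i j : ℝ) : ℂ))
        = Msc.map (Complex.ofRealHom) := by
      funext i j
      have hms : A0 i j + H0 i j = Msc i j := by rw [← Matrix.add_apply, hsum]
      show ((A0 i j : ℝ) : ℂ) + ζ ^ τ * (ζ ^ τ)⁻¹ * ((H0 i j : ℝ) : ℂ) = ((Msc i j : ℝ) : ℂ)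
      rw [mul_inv_cancel₀ (pow_ne_zero τ hζ0), one_mul, ← hms]
      push_cast
      ring
    rw [hmats] at h1
    have h2 := eval_det_ctrbM Complex.ofRealHom n' Msc Bsc g0
    have h3 : (ctrbM n' Msc Bsc) = ctrbMatrix Msc Bsc := rfl
    rw [h3] at h2
    have hBeq : Bsc.map Complex.ofRealHom = Matrix.of fun i u => ((Bsc i u : ℝ) : ℂ) := rfl
    rw [hBeq] at h2
    rw [← h2] at h1
    rw [Polynomial.eval_zero] at h1
    have h4 : ((((ctrbMatrix Msc Bsc).submatrix id g0).det : ℝ) : ℂ) = 0 := h1.symm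
    exact hg0 (Complex.ofReal_eq_zero.mp h4)
  -- choose a real parameter avoiding all roots
  have hfin : {t : ℝ | ∃ τ ∈ Finset.range M, (d τ).eval ((t : ℝ) : ℂ) = 0}.Finite := by
    apply Set.Finite.subset (Set.Finite.biUnion (Finset.range M).finite_toSet
      (fun τ _ => Set.Finite.preimage (Set.injOn_of_injective Complex.ofReal_injective)
        (Polynomial.finite_setOf_isRoot (hd0 τ))))
    intro t ht
    obtain ⟨τ, hτ, h⟩ := ht
    exact Set.mem_biUnion hτ h
  obtain ⟨tstar, htstar⟩ := hfin.infinite_compl.nonempty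
  have htne : ∀ τ, τ ∈ Finset.range M → (d τ).eval ((tstar : ℝ) : ℂ) ≠ 0 := by
    intro τ hτ h
    exact htstar ⟨τ, hτ, h⟩
  -- the real coupling matrix
  set Hs : Matrix (Fin n) (Fin n) ℝ := fun i j => tstar * H0 i j with hHsdef
  have hHssupp : ∀ i j, H i j = false → Hs i j = 0 := by
    intro i j hij; simp [hHsdef, hH0supp i j hij]
  -- complex versions of the small matrices
  set A0c : Matrix (Fin n) (Fin n) ℂ := A0.map Complex.ofReal with hA0cdef
  set Hsc : Matrix (Fin n) (Fin n) ℂ := Hs.map Complex.ofReal with hHscdef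
  set Bc : Matrix (Fin n) (Fin p) ℂ := Bsc.map Complex.ofReal with hBcdef
  have hcert : ∀ τ ∈ Finset.range M,
      ((ctrbM n' (A0c + ζ ^ τ • Hsc) Bc).submatrix id g0).det ≠ 0 := by
    intro τ hτ
    have h1 := hdeval τ ((tstar : ℝ) : ℂ)
    have hmat : (Matrix.of fun i j => ((A0 i j : ℝ) : ℂ) + ζ ^ τ * ((tstar : ℝ) : ℂ) * ((H0 i j : ℝ) : ℂ))
        = A0c + ζ ^ τ • Hsc := by
      funext i j
      simp [hA0cdef, hHscdef, hHsdef, Matrix.map_apply, Matrix.add_apply, Matrix.smul_apply,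
        smul_eq_mul]
      change _ = ζ ^ τ * (((tstar * H0 i j : ℝ)) : ℂ)
      push_cast
      ring
    rw [hmat] at h1
    have hBeq : (Matrix.of fun i u => ((Bsc i u : ℝ) : ℂ)) = Bc := rfl
    rw [hBeq] at h1
    rw [← h1]
    exact htne τ hτ
  -- the big real system and its complexification
  set Ab : Matrix (Fin r × Fin n) (Fin r × Fin n) ℝ := Matrix.of fun i j =>
    (if i.1 = j.1 then A0 i.2 j.2 else 0) + (if i.1 = σ j.1 then Hs i.2 j.2 else 0) with hAbdef
  set Bb : Matrix (Fin r × Fin n) (Fin r × Fin p) ℝ := Matrix.of fun i u =>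
    (if i.1 = u.1 then Bsc i.2 u.2 else 0) with hBbdef
  set Abc : Matrix (Fin r × Fin n) (Fin r × Fin n) ℂ := Matrix.of fun i j =>
    (if i.1 = j.1 then A0c i.2 j.2 else 0) + (if i.1 = σ j.1 then Hsc i.2 j.2 else 0) with hAbcdef
  set Bbc : Matrix (Fin r × Fin n) (Fin r × Fin p) ℂ := Matrix.of fun i u =>
    (if i.1 = u.1 then Bc i.2 u.2 else 0) with hBbcdef
  have hmapA : Ab.map Complex.ofRealHom = Abc := by
    funext i j
    show ((Ab i j : ℝ) : ℂ) = Abc i j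
    simp [hAbdef, hAbcdef, hA0cdef, hHscdef, Matrix.map_apply, apply_ite Complex.ofReal]
  have hmapB : Bb.map Complex.ofRealHom = Bbc := by
    funext i u
    show ((Bb i u : ℝ) : ℂ) = Bbc i u
    simp [hBbdef, hBbcdef, hBcdef, Matrix.map_apply, apply_ite Complex.ofReal]
  set Nb := Fintype.card (Fin r × Fin n) with hNbdef
  have hn'n : n' = n := Fintype.card_fin n
  have hnNb : n ≤ Nb := by
    rw [hNbdef, Fintype.card_prod, Fintype.card_fin, Fintype.card_fin]
    exact Nat.le_mul_of_pos_left n hrpos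
  -- only the zero vector annihilates the complexified controllability matrix on the left
  have hannC : ∀ v : (Fin r × Fin n) → ℂ, v ᵥ* (ctrbM Nb Abc Bbc) = 0 → v = 0 := by
    intro v hv
    have hvj : ∀ j : ℕ, j < Nb → v ᵥ* ((Abc ^ j) * Bbc) = 0 := by
      intro j hj
      funext u
      exact congrFun hv (⟨j, hj⟩, u)
    have hkey : ∀ t : ℕ, t ∈ Finset.range M → ∀ z : Fin r → ℂ,
        (∀ k, z (σ⁻¹ k) = ζ ^ t * z k) → ∀ q : Fin n, (∑ k : Fin r, v (k, q) * z k) = 0 := by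
      intro t ht z hz
      set u : Fin n → ℂ := fun q => ∑ k : Fin r, v (k, q) * z k with hudef
      have hu : u ᵥ* (ctrbM n' (A0c + ζ ^ t • Hsc) Bc) = 0 := by
        funext jc
        obtain ⟨j, c⟩ := jc
        have hjNb : (j : ℕ) < Nb := lt_of_lt_of_le (lt_of_lt_of_le j.isLt (le_of_eq hn'n)) hnNb
        set Q : Matrix (Fin n) (Fin p) ℂ := ((A0c + ζ ^ t • Hsc) ^ (j : ℕ)) * Bc with hQdef
        show (∑ q : Fin n, u q * Q q c) = 0
        have step1 : (∑ q : Fin n, u q * Q q c)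
            = ∑ k : Fin r, ∑ q : Fin n, v (k, q) * (z k * Q q c) := by
          rw [Finset.sum_comm]
          apply Finset.sum_congr rfl
          intro q _
          rw [hudef, Finset.sum_mul]
          apply Finset.sum_congr rfl
          intro k _
          ring
        have step2 : (∑ k : Fin r, ∑ q : Fin n, v (k, q) * (z k * Q q c))
            = v ⬝ᵥ (tens z (fun q => Q q c)) := by
          rw [dotProduct, Fintype.sum_prod_type]
          rfl
        have hcol : (fun q => Q q c) = Q *ᵥ Pi.single c 1 := by
          funext q
          simp [Matrix.mulVec_single]
        have step3 : tens z (fun q => Q q c)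
            = (Abc ^ (j : ℕ)) *ᵥ (Bbc *ᵥ tens z (Pi.single c 1)) := by
          rw [hcol, hQdef, ← Matrix.mulVec_mulVec]
          rw [← big_pow_mulVec_tens σ A0c Hsc (ζ ^ t) z hz (Bc *ᵥ Pi.single c 1) (j : ℕ)]
          rw [← bigB_mulVec_tens Bc z (Pi.single c 1)]
        rw [step1, step2, step3, Matrix.mulVec_mulVec, Matrix.dotProduct_mulVec, hvj (j : ℕ) hjNb,
          zero_dotProduct]
      have hu0 := eq_zero_of_vecMul_of_det (hcert t ht) hu
      intro q
      exact congrFun hu0 q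
    funext i
    obtain ⟨k0, q0⟩ := i
    obtain ⟨z, hz1, hz2⟩ := perm_eigen_decomp σ M hM hσM hζ (Pi.single k0 1)
    have hv0 : (∑ t ∈ Finset.range M, ∑ k : Fin r, v (k, q0) * z t k) = v (k0, q0) := by
      rw [Finset.sum_comm]
      have h5 : ∀ k : Fin r, (∑ t ∈ Finset.range M, v (k, q0) * z t k)
          = v (k, q0) * (Pi.single k0 1 : Fin r → ℂ) k := by
        intro k
        rw [← Finset.mul_sum, hz2 k]
      rw [Finset.sum_congr rfl (fun k _ => h5 k)]
      rw [Finset.sum_eq_single k0]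
      · simp
      · intro b _ hb
        rw [Pi.single_eq_of_ne hb, mul_zero]
      · intro hk0
        exact absurd (Finset.mem_univ k0) hk0
    show v (k0, q0) = 0
    rw [← hv0]
    apply Finset.sum_eq_zero
    intro t ht
    exact hkey t ht (z t) (hz1 t) q0
  -- transfer to the real controllability matrix
  have hannR : ∀ v : (Fin r × Fin n) → ℝ, v ᵥ* (ctrbMatrix Ab Bb) = 0 → v = 0 := by
    intro v hv
    have hC : (ctrbMatrix Ab Bb).map Complex.ofRealHom = ctrbM Nb Abc Bbc := by
      have h1 : ctrbMatrix Ab Bb = ctrbM Nb Ab Bb := rfl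
      rw [h1, ctrbM_map, hmapA, hmapB]
    have hvc : (fun i => ((v i : ℝ) : ℂ)) ᵥ* (ctrbM Nb Abc Bbc) = 0 := by
      rw [← hC]
      funext cidx
      have h2 : (∑ i, v i * (ctrbMatrix Ab Bb) i cidx) = 0 := congrFun hv cidx
      show (∑ i, ((v i : ℝ) : ℂ) * ((ctrbMatrix Ab Bb).map Complex.ofRealHom) i cidx) = 0
      have h3 : ∀ i, ((v i : ℝ) : ℂ) * ((ctrbMatrix Ab Bb).map Complex.ofRealHom) i cidx
          = (((v i * (ctrbMatrix Ab Bb) i cidx : ℝ)) : ℂ) := by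
        intro i
        simp [Matrix.map_apply]
      rw [Finset.sum_congr rfl (fun i _ => h3 i), ← Complex.ofReal_sum, h2, Complex.ofReal_zero]
    have hz := hannC _ hvc
    funext i
    have h4 := congrFun hz i
    simpa using h4
  have hrank : (ctrbMatrix Ab Bb).rank = Fintype.card (Fin r × Fin n) :=
    rank_eq_card_of_vecMul hannR
  obtain ⟨g1, hg1⟩ := exists_minor_det_ne_zero (M := ctrbMatrix Ab Bb) hrank
  -- one-variable real perturbation to achieve the exact sparsity pattern
  set JA : Matrix (Fin r × Fin n) (Fin r × Fin n) ℝ :=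
    Matrix.of fun i j => if simA r A' H E i j = true then (1 : ℝ) else 0 with hJAdef
  set JB : Matrix (Fin r × Fin n) (Fin r × Fin p) ℝ :=
    Matrix.of fun i u => if simB r B' i u = true then (1 : ℝ) else 0 with hJBdef
  set PA2 : Matrix (Fin r × Fin n) (Fin r × Fin n) (Polynomial ℝ) :=
    Matrix.of fun i j => Polynomial.C (Ab i j) + Polynomial.C (JA i j) * Polynomial.X with hPA2
  set PB2 : Matrix (Fin r × Fin n) (Fin r × Fin p) (Polynomial ℝ) :=
    Matrix.of fun i u => Polynomial.C (Bb i u) + Polynomial.C (JB i u) * Polynomial.X with hPB2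
  set d2 : Polynomial ℝ := ((ctrbM Nb PA2 PB2).submatrix id g1).det with hd2
  have hdeval2 : ∀ s : ℝ, d2.eval s
      = ((ctrbM Nb (Matrix.of fun i j => Ab i j + JA i j * s)
          (Matrix.of fun i u => Bb i u + JB i u * s)).submatrix id g1).det := by
    intro s
    have hA : PA2.map (Polynomial.evalRingHom s)
        = Matrix.of fun i j => Ab i j + JA i j * s := by
      funext i j
      simp [hPA2, Matrix.map_apply]
    have hB : PB2.map (Polynomial.evalRingHom s)
        = Matrix.of fun i u => Bb i u + JB i u * s := by
      funext i u
      simp [hPB2, Matrix.map_apply]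
    have h1 := eval_det_ctrbM (Polynomial.evalRingHom s) Nb PA2 PB2 g1
    rw [hA, hB] at h1
    have h2 : (Polynomial.evalRingHom s) d2 = d2.eval s := rfl
    rw [← h2]
    exact h1
  have hd20 : d2 ≠ 0 := by
    intro hzero
    have h1 := hdeval2 0
    have hA : (Matrix.of fun i j => Ab i j + JA i j * (0:ℝ)) = Ab := by
      funext i j
      simp
    have hB : (Matrix.of fun i u => Bb i u + JB i u * (0:ℝ)) = Bb := by
      funext i u
      simp
    rw [hA, hB, hzero, Polynomial.eval_zero] at h1
    have h2 : ctrbM Nb Ab Bb = ctrbMatrix Ab Bb := rfl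
    rw [h2] at h1
    exact hg1 h1.symm
  have hbad : ({s : ℝ | d2.eval s = 0}
      ∪ (Set.range fun ij : (Fin r × Fin n) × (Fin r × Fin n) => -Ab ij.1 ij.2)
      ∪ (Set.range fun iu : (Fin r × Fin n) × (Fin r × Fin p) => -Bb iu.1 iu.2)).Finite :=
    ((Polynomial.finite_setOf_isRoot hd20).union (Set.finite_range _)).union (Set.finite_range _)
  obtain ⟨sstar, hsstar⟩ := hbad.infinite_compl.nonempty
  have hs1 : d2.eval sstar ≠ 0 := by
    intro h
    exact hsstar (Set.mem_union_left _ (Set.mem_union_left _ h))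
  have hs2 : ∀ i j, Ab i j + sstar ≠ 0 := by
    intro i j h
    exact hsstar (Set.mem_union_left _ (Set.mem_union_right _
      ⟨(i, j), by show -Ab i j = sstar; linarith⟩))
  have hs3 : ∀ i u, Bb i u + sstar ≠ 0 := by
    intro i u h
    exact hsstar (Set.mem_union_right _ ⟨(i, u), by show -Bb i u = sstar; linarith⟩)
  -- supports of Ab, Bb lie within the patterns
  have hAbsupp : ∀ i j, simA r A' H E i j = false → Ab i j = 0 := by
    intro i j hf
    have h1 : (if i.1 = j.1 then A' i.2 j.2 else false) = false
        ∧ (E i.1 j.1 && H i.2 j.2) = false := by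
      simpa [simA, Bool.or_eq_false_iff] using hf
    show (if i.1 = j.1 then A0 i.2 j.2 else 0) + (if i.1 = σ j.1 then Hs i.2 j.2 else 0) = 0
    have hterm1 : (if i.1 = j.1 then A0 i.2 j.2 else 0) = 0 := by
      by_cases hd : i.1 = j.1
      · rw [if_pos hd]
        apply hA0supp
        have h2 := h1.1
        rw [if_pos hd] at h2
        exact h2
      · rw [if_neg hd]
    have hterm2 : (if i.1 = σ j.1 then Hs i.2 j.2 else 0) = 0 := by
      by_cases hd : i.1 = σ j.1
      · rw [if_pos hd]
        apply hHssupp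
        have hEtrue : E i.1 j.1 = true := by rw [hd]; exact hσ j.1
        have h2 := h1.2
        rw [hEtrue] at h2
        simpa using h2
      · rw [if_neg hd]
    rw [hterm1, hterm2, add_zero]
  have hBbsupp : ∀ i u, simB r B' i u = false → Bb i u = 0 := by
    intro i u hf
    show (if i.1 = u.1 then Bsc i.2 u.2 else 0) = 0
    by_cases hd : i.1 = u.1
    · rw [if_pos hd]
      apply (hBs _ _).mpr
      have : (if i.1 = u.1 then B' i.2 u.2 else false) = false := by simpa [simB] using hf
      rw [if_pos hd] at this
      exact this
    · rw [if_neg hd]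
  -- the final witness
  refine ⟨Matrix.of fun i j => Ab i j + JA i j * sstar,
    Matrix.of fun i u => Bb i u + JB i u * sstar, ?_, ?_, ?_⟩
  · intro i j
    show Ab i j + JA i j * sstar = 0 ↔ _
    by_cases hpat : simA r A' H E i j = true
    · rw [hpat]
      have hJ : JA i j = 1 := by simp [hJAdef, hpat]
      rw [hJ, one_mul]
      constructor
      · intro h
        exact absurd h (hs2 i j)
      · intro h
        simp at h
    · have hfalse : simA r A' H E i j = false := by
        revert hpat
        cases (simA r A' H E i j) <;> simp
      have hJ : JA i j = 0 := by simp [hJAdef, hfalse]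
      rw [hfalse, hJ, zero_mul, add_zero, hAbsupp i j hfalse]
      simp
  · intro i u
    show Bb i u + JB i u * sstar = 0 ↔ _
    by_cases hpat : simB r B' i u = true
    · rw [hpat]
      have hJ : JB i u = 1 := by simp [hJBdef, hpat]
      rw [hJ, one_mul]
      constructor
      · intro h
        exact absurd h (hs3 i u)
      · intro h
        simp at h
    · have hfalse : simB r B' i u = false := by
        revert hpat
        cases (simB r B' i u) <;> simp
      have hJ : JB i u = 0 := by simp [hJBdef, hfalse]
      rw [hfalse, hJ, zero_mul, add_zero, hBbsupp i u hfalse]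
      simp
  · show (ctrbMatrix _ _).rank = _
    apply rank_eq_card_of_vecMul
    intro v hvv
    have hdet : ((ctrbM Nb (Matrix.of fun i j => Ab i j + JA i j * sstar)
        (Matrix.of fun i u => Bb i u + JB i u * sstar)).submatrix id g1).det ≠ 0 := by
      rw [← hdeval2 sstar]
      exact hs1
    exact eq_zero_of_vecMul_of_det hdet hvv
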